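/- Let G be a group generated by S such that the abelianization of G has a nontrivial torsion element. Then the central extension 1 → ker(Φ) → Env(D(S^G)) → G → 1 does not split; i.e., there is no group homomorphism section of Φ. -/

import Mathlib

/-- The set of all conjugates of elements of `S` in `G`. -/
def conjSet (G : Type*) [Group G] (S : Set G) : Set G :=
  {x | ∃ s ∈ S, ∃ g : G, x = g * s * g⁻¹}

theorem conjSet.conj_mem {G : Type*} [Group G] {S : Set G} {x : G}
    (hx : x ∈ conjSet G S) (g : G) : g * x * g⁻¹ ∈ conjSet G S := by
  obtain ⟨s, hs, h, rfl⟩ := hx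
  exact ⟨s, hs, g * h, by group⟩

/-- The Dehn quandle operation `x * y = y x y⁻¹` on the set of conjugates of `S`. -/
def dehnOp {G : Type*} [Group G] {S : Set G} (x y : conjSet G S) : conjSet G S :=
  ⟨(y : G) * (x : G) * (y : G)⁻¹, conjSet.conj_mem x.2 (y : G)⟩

/-- Relations defining the enveloping group of the Dehn quandle `D(S^G)`:
`e_{x*y} = e_y e_x e_y⁻¹`. -/
def dehnEnvRels (G : Type*) [Group G] (S : Set G) : Set (FreeGroup (conjSet G S)) :=
  {r | ∃ x y : conjSet G S,
    r = FreeGroup.of (dehnOp x y) *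
      (FreeGroup.of y * FreeGroup.of x * (FreeGroup.of y)⁻¹)⁻¹}

/-- The enveloping group of the Dehn quandle `D(S^G)`. -/
abbrev DehnEnv (G : Type*) [Group G] (S : Set G) : Type _ :=
  PresentedGroup (dehnEnvRels G S)

/-- Conjugacy setoid on `conjSet G S`. -/
def conjSetoid (G : Type*) [Group G] (S : Set G) : Setoid (conjSet G S) :=
  ⟨fun x y => IsConj (x : G) (y : G),
    ⟨fun _ => IsConj.refl _, IsConj.symm, IsConj.trans⟩⟩

lemma freeAbelianGroup_torsionfree {α : Type*} (x : FreeAbelianGroup α)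
    (n : ℕ) (hn : 0 < n) (hx : n • x = 0) : x = 0 := by
  have := congrArg (FreeAbelianGroup.equivFinsupp α) hx
  rw [map_nsmul, map_zero] at this
  have h2 : FreeAbelianGroup.equivFinsupp α x = 0 := by
    ext a
    have := congrFun (congrArg DFunLike.coe this) a
    simp only [Finsupp.smul_apply, Finsupp.coe_zero, Pi.zero_apply, smul_eq_mul] at this ⊢
    have : (n : ℤ) * (FreeAbelianGroup.equivFinsupp α x) a = 0 := by exact_mod_cast this
    exact (mul_eq_zero.mp this).resolve_left (by exact_mod_cast hn.ne')
  have := congrArg (FreeAbelianGroup.equivFinsupp α).symm h2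
  simpa using this

/-- If the abelianization of `G` has a nontrivial torsion element, then the central
extension `1 → ker Φ → Env(D(S^G)) → G → 1` does not split. -/
theorem envelGroup_extension_not_split (G : Type*) [Group G] (S : Set G)
    (hS : Subgroup.closure S = ⊤)
    (htor : ∃ a : Abelianization G, a ≠ 1 ∧ ∃ n : ℕ, 0 < n ∧ a ^ n = 1)
    (Φ : DehnEnv G S →* G)
    (hΦ : ∀ x : conjSet G S, Φ (PresentedGroup.of x) = (x : G)) :
    ¬ ∃ s : G →* DehnEnv G S, Φ.comp s = MonoidHom.id G := by
  rintro ⟨s, hs⟩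
  obtain ⟨a, ha, n, hn, han⟩ := htor
  letI := conjSetoid G S
  set Q := Quotient (conjSetoid G S)
  -- π : DehnEnv → Multiplicative (FreeAbelianGroup Q)
  set f : conjSet G S → Multiplicative (FreeAbelianGroup Q) :=
    fun x => Multiplicative.ofAdd (FreeAbelianGroup.of (⟦x⟧ : Q)) with hf
  have hrels : ∀ r ∈ dehnEnvRels G S, FreeGroup.lift f r = 1 := by
    rintro r ⟨x, y, rfl⟩
    have hxy : (⟦dehnOp x y⟧ : Q) = ⟦x⟧ := Quotient.sound (isConj_iff.mpr ⟨(y:G)⁻¹, by show (y:G)⁻¹ * ((y:G)*(x:G)*(y:G)⁻¹) * (y:G)⁻¹⁻¹ = x; group⟩)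
    simp only [map_mul, map_inv, FreeGroup.lift_apply_of, hf, hxy]
    apply mul_inv_eq_one.mpr
    apply Multiplicative.toAdd.injective
    simp [add_comm]
  set π : DehnEnv G S →* Multiplicative (FreeAbelianGroup Q) :=
    PresentedGroup.toGroup hrels with hπ
  -- θ : FreeAbelianGroup Q →+ Additive (Abelianization G)
  have θwd : ∀ x y : conjSet G S, (conjSetoid G S).r x y →
      Additive.ofMul (Abelianization.of (x : G)) = Additive.ofMul (Abelianization.of (y : G)) := by
    intro x y h
    obtain ⟨c, hc⟩ := isConj_iff.mp h
    have : Abelianization.of (c * (x:G) * c⁻¹) = Abelianization.of (y : G) := by rw [hc]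
    rw [← this]
    simp only [map_mul, map_inv]
    rw [mul_comm (Abelianization.of c)]
    group
  set θ0 : Q → Additive (Abelianization G) :=
    Quotient.lift (fun x : conjSet G S => Additive.ofMul (Abelianization.of (x : G))) θwd with hθ0
  set θ : FreeAbelianGroup Q →+ Additive (Abelianization G) := FreeAbelianGroup.lift θ0 with hθ
  set θm : Multiplicative (FreeAbelianGroup Q) →* Abelianization G :=
    θ.toMultiplicativeLeft with hθm
  -- θm ∘ π = Abelianization.of ∘ Φ
  have key : θm.comp π = (Abelianization.of).comp Φ := by
    apply PresentedGroup.ext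
    intro x
    simp only [MonoidHom.comp_apply, hΦ, hπ, PresentedGroup.toGroup.of, hθm, hθ, hθ0, hf]
    show Additive.toMul (FreeAbelianGroup.lift _ (FreeAbelianGroup.of _)) = _
    rw [FreeAbelianGroup.lift_apply_of]
    rfl
  -- ν : G →* Multiplicative (FreeAbelianGroup Q), factors through abelianization
  set ν : Abelianization G →* Multiplicative (FreeAbelianGroup Q) :=
    Abelianization.lift (π.comp s) with hν
  have hνa : ν a ^ n = 1 := by rw [← map_pow, han, map_one]
  have hνa1 : ν a = 1 := by
    apply Multiplicative.toAdd.injective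
    refine freeAbelianGroup_torsionfree _ n hn ?_
    have := congrArg Multiplicative.toAdd hνa
    simpa [toAdd_pow] using this
  -- θm ∘ ν = id on Abelianization G
  have hid : θm.comp ν = MonoidHom.id (Abelianization G) := by
    apply Abelianization.hom_ext
    ext g
    have h1 : θm (π (s g)) = Abelianization.of (Φ (s g)) :=
      congrFun (congrArg DFunLike.coe key) (s g)
    have h2 : Φ (s g) = g := congrFun (congrArg DFunLike.coe hs) g
    simp [hν, h1, h2]
  have : a = 1 := by
    have := congrFun (congrArg DFunLike.coe hid) a
    simp only [MonoidHom.comp_apply, MonoidHom.id_apply] at this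
    rw [← this, hνa1, map_one]
  exact ha this
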